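/- Define a_j = C(w-1, j) q^{w-d-j} for 0 ≤ j ≤ w-d. If w ≤ q then a_j > a_{j+1} for all 0 ≤ j < w-d, i.e., the sequence (a_j) is strictly decreasing; consequently the alternating sum Σ_{j=0}^{w-d} (-1)^j a_j is positive. -/

import Mathlib

lemma alt_pos : ∀ (m : ℕ) (f : ℕ → ℤ), (∀ j < m, f (j + 1) < f j) → 0 < f m →
    0 < ∑ j ∈ Finset.range (m + 1), (-1) ^ j * f j ∧
      ∑ j ∈ Finset.range (m + 1), (-1) ^ j * f j ≤ f 0 := by
  intro m
  induction m with
  | zero =>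
    intro f _ h0
    simp [h0, le_of_lt h0]
  | succ m ih =>
    intro f hdec hlast
    obtain ⟨h1, h2⟩ := ih (fun j => f (j + 1)) (fun j hj => hdec (j + 1) (by omega)) hlast
    have hsum : ∑ j ∈ Finset.range (m + 2), (-1) ^ j * f j
        = f 0 - ∑ j ∈ Finset.range (m + 1), (-1) ^ j * f (j + 1) := by
      rw [Finset.sum_range_succ' (fun j => (-1) ^ j * f j) (m + 1)]
      have : ∑ i ∈ Finset.range (m + 1), (-1) ^ (i + 1) * f (i + 1)
          = - ∑ i ∈ Finset.range (m + 1), (-1) ^ i * f (i + 1) := by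
        rw [← Finset.sum_neg_distrib]
        apply Finset.sum_congr rfl
        intro i _
        ring
      simpa [this] using by ring
    have hf10 : f 1 < f 0 := hdec 0 (by omega)
    constructor
    · rw [hsum]; linarith
    · rw [hsum]; linarith

/-- Let `a_j = C(w-1, j) q^(w-d-j)` for `0 ≤ j ≤ w-d`, where `q ≥ 2`, `d ≥ 1` and
`d ≤ w ≤ q`. Then the sequence `(a_j)` is strictly decreasing, and consequently the
alternating sum `∑_{j=0}^{w-d} (-1)^j a_j` is positive. -/
theorem stmt_19 (q d w : ℕ) (hq : 2 ≤ q) (hd : 1 ≤ d) (hdw : d ≤ w) (hwq : w ≤ q) :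
    (∀ j : ℕ, j < w - d →
      (w - 1).choose (j + 1) * q ^ (w - d - (j + 1)) < (w - 1).choose j * q ^ (w - d - j)) ∧
    0 < ∑ j ∈ Finset.range (w - d + 1),
        (-1) ^ j * ((w - 1).choose j : ℤ) * (q : ℤ) ^ (w - d - j) := by
  have hdec : ∀ j : ℕ, j < w - d →
      (w - 1).choose (j + 1) * q ^ (w - d - (j + 1)) < (w - 1).choose j * q ^ (w - d - j) := by
    intro j hj
    have hcj : 0 < (w - 1).choose j := Nat.choose_pos (by omega)
    have hc := Nat.choose_succ_right_eq (w - 1) j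
    -- key: choose (w-1) (j+1) < choose (w-1) j * q
    have hkey : (w - 1).choose (j + 1) < (w - 1).choose j * q := by
      have h1 : (w - 1).choose (j + 1) * (j + 1) = (w - 1).choose j * (w - 1 - j) := hc
      have h2 : w - 1 - j < q * (j + 1) := by
        have : q ≤ q * (j + 1) := Nat.le_mul_of_pos_right q (by omega)
        omega
      have h3 : (w - 1).choose (j + 1) * (j + 1) < (w - 1).choose j * q * (j + 1) := by
        rw [h1, mul_assoc]
        exact (Nat.mul_lt_mul_left hcj).mpr h2
      exact Nat.lt_of_mul_lt_mul_right h3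
    have hpow : w - d - j = (w - d - (j + 1)) + 1 := by omega
    rw [hpow, pow_succ', ← mul_assoc]
    have hQ : 0 < q ^ (w - d - (j + 1)) := Nat.pow_pos (by omega)
    exact (Nat.mul_lt_mul_right hQ).mpr hkey
  refine ⟨hdec, ?_⟩
  set m := w - d with hm
  have hlast : (0 : ℤ) < ((w - 1).choose m : ℤ) * (q : ℤ) ^ (m - m) := by
    have : 0 < (w - 1).choose m := Nat.choose_pos (by omega)
    simp
    exact_mod_cast this
  have hdecZ : ∀ j < m, (((w - 1).choose (j + 1) : ℤ) * (q : ℤ) ^ (m - (j + 1)))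
      < ((w - 1).choose j : ℤ) * (q : ℤ) ^ (m - j) := by
    intro j hj
    exact_mod_cast hdec j hj
  obtain ⟨h1, _⟩ := alt_pos m (fun j => ((w - 1).choose j : ℤ) * (q : ℤ) ^ (m - j)) hdecZ hlast
  calc (0 : ℤ) < ∑ j ∈ Finset.range (m + 1), (-1) ^ j * (((w - 1).choose j : ℤ) * (q : ℤ) ^ (m - j)) := h1
    _ = ∑ j ∈ Finset.range (m + 1), (-1) ^ j * ((w - 1).choose j : ℤ) * (q : ℤ) ^ (m - j) := by
        apply Finset.sum_congr rfl; intro i _; ring
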